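/- If a nonsingular billiard trajectory τ realizes a finite word w = E₁…Eₙ, then there exists ε > 0 such that every trajectory whose unfolded segment lies in the ε-tubular neighborhood of the unfolded segment of τ and is parallel to τ also realizes w. Consequently, every finite word realized by some (possibly singular) trajectory is realized by a nonsingular trajectory. -/

import Mathlib

/-- A (possibly singular) trajectory, given by a basepoint `p` and direction
`v` in the development, realizes the word `w = E₁…Eₙ` if it crosses the open
interiors of the developed edges `E i` in order, transversely. -/
def RealizesWord (n : ℕ) (E : Fin n → (ℝ × ℝ) × (ℝ × ℝ)) (p v : ℝ × ℝ) : Prop :=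
  v ≠ 0 ∧ (∀ i : Fin n, ¬ ∃ c : ℝ, (E i).2 - (E i).1 = c • v) ∧
    ∃ t : Fin n → ℝ, StrictMono t ∧
      ∀ i : Fin n, p + t i • v ∈ openSegment ℝ (E i).1 (E i).2

/-- A trajectory is singular if it hits a vertex of the development. -/
def SingularTraj (V : Finset (ℝ × ℝ)) (p v : ℝ × ℝ) : Prop :=
  ∃ t : ℝ, p + t • v ∈ V

/-- determinant of the 2x2 matrix with columns `v`, `d`. -/
noncomputable def detD (v d : ℝ × ℝ) : ℝ := v.1 * d.2 - v.2 * d.1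

/-- time at which the line `q + t v` crosses the line `a + u d`. -/
noncomputable def crossT (v a d q : ℝ × ℝ) : ℝ :=
  ((a - q).1 * d.2 - (a - q).2 * d.1) / detD v d

/-- parameter on the edge at which the crossing happens. -/
noncomputable def crossU (v a d q : ℝ × ℝ) : ℝ :=
  (v.2 * (a - q).1 - v.1 * (a - q).2) / detD v d

lemma cross_key (v a d q : ℝ × ℝ) (h : detD v d ≠ 0) :
    q + crossT v a d q • v = (1 - crossU v a d q) • a + crossU v a d q • (a + d) := by
  have h' : v.1 * d.2 - v.2 * d.1 ≠ 0 := h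
  rw [Prod.ext_iff]
  constructor <;>
  · simp only [crossT, crossU, detD, Prod.fst_add, Prod.snd_add, Prod.fst_sub, Prod.snd_sub,
      Prod.smul_fst, Prod.smul_snd, smul_eq_mul]
    have h'' : d.2 * v.1 - d.1 * v.2 ≠ 0 := by intro e; apply h'; linarith
    field_simp
    ring

lemma cross_uniq (v a d q : ℝ × ℝ) (h : detD v d ≠ 0) (s u : ℝ)
    (hq : q + s • v = (1 - u) • a + u • (a + d)) :
    s = crossT v a d q ∧ u = crossU v a d q := by
  have h' : v.1 * d.2 - v.2 * d.1 ≠ 0 := h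
  have h1 : q.1 + s * v.1 = (1 - u) * a.1 + u * (a.1 + d.1) := by
    have := congrArg Prod.fst hq; simp at this; linarith
  have h2 : q.2 + s * v.2 = (1 - u) * a.2 + u * (a.2 + d.2) := by
    have := congrArg Prod.snd hq; simp at this; linarith
  constructor
  · simp only [crossT, detD, Prod.fst_sub, Prod.snd_sub]
    rw [eq_div_iff h']
    linear_combination d.2 * h1 - d.1 * h2
  · simp only [crossU, detD, Prod.fst_sub, Prod.snd_sub]
    rw [eq_div_iff h']
    linear_combination v.2 * h1 - v.1 * h2

lemma cross_cont_T (v a d : ℝ × ℝ) : Continuous fun q => crossT v a d q := by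
  unfold crossT
  fun_prop

lemma cross_cont_U (v a d : ℝ × ℝ) : Continuous fun q => crossU v a d q := by
  unfold crossU
  fun_prop

lemma cross_shift (v a d q : ℝ × ℝ) (h : detD v d ≠ 0) (s : ℝ) :
    crossT v a d (q + s • v) = crossT v a d q - s ∧
      crossU v a d (q + s • v) = crossU v a d q := by
  have hq : (q + s • v) + (crossT v a d q - s) • v
      = (1 - crossU v a d q) • a + crossU v a d q • (a + d) := by
    rw [← cross_key v a d q h]; module
  have := cross_uniq v a d (q + s • v) h _ _ hq
  exact ⟨by linarith [this.1], this.2.symm⟩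

lemma det_ne_zero (v d : ℝ × ℝ) (hv : v ≠ 0) (hd : ¬ ∃ c : ℝ, d = c • v) :
    detD v d ≠ 0 := by
  intro h0
  have h0' : v.1 * d.2 - v.2 * d.1 = 0 := h0
  have hv' : v.1 ≠ 0 ∨ v.2 ≠ 0 := by
    by_contra h; push_neg at h
    exact hv (Prod.ext_iff.mpr ⟨h.1, h.2⟩)
  apply hd
  rcases hv' with h | h
  · exact ⟨d.1 / v.1, Prod.ext_iff.mpr ⟨by simp only [Prod.smul_fst, smul_eq_mul]; field_simp, by simp only [Prod.smul_snd, smul_eq_mul]; field_simp; linarith⟩⟩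
  · exact ⟨d.2 / v.2, Prod.ext_iff.mpr ⟨by simp only [Prod.smul_fst, smul_eq_mul]; field_simp; linarith, by simp only [Prod.smul_snd, smul_eq_mul]; field_simp⟩⟩

/-- If a trajectory `(p, v)` realizes the finite word `w` in the
development (whose vertex set is the finite set `V`, containing all edge
endpoints), then: (1) if `(p, v)` is nonsingular, there is `ε > 0` such that
every parallel trajectory lying in the `ε`-tubular neighborhood of it also
realizes `w`; and (2) consequently, `w` is realized by some nonsingular
trajectory. -/
theorem tubular_neighborhood_realizes (V : Finset (ℝ × ℝ)) (n : ℕ)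
    (E : Fin n → (ℝ × ℝ) × (ℝ × ℝ))
    (hEV : ∀ i : Fin n, (E i).1 ∈ V ∧ (E i).2 ∈ V)
    (p v : ℝ × ℝ) (hreal : RealizesWord n E p v) :
    (¬ SingularTraj V p v →
      ∃ ε > 0, ∀ p' : ℝ × ℝ, (∃ s : ℝ, dist p' (p + s • v) < ε) →
        RealizesWord n E p' v) ∧
    (∃ p' : ℝ × ℝ, RealizesWord n E p' v ∧ ¬ SingularTraj V p' v) := by
  obtain ⟨hv, hE, t, ht, hmem⟩ := hreal
  have hD : ∀ i : Fin n, detD v ((E i).2 - (E i).1) ≠ 0 :=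
    fun i => det_ne_zero v _ hv (hE i)
  have hb : ∀ i : Fin n, (E i).1 + ((E i).2 - (E i).1) = (E i).2 := fun i => by abel
  have hbase : ∀ i : Fin n, t i = crossT v (E i).1 ((E i).2 - (E i).1) p ∧
      crossU v (E i).1 ((E i).2 - (E i).1) p ∈ Set.Ioo (0:ℝ) 1 := by
    intro i
    obtain ⟨α, β, hα, hβ, hαβ, heq⟩ := hmem i
    have heq' : p + t i • v
        = (1 - β) • (E i).1 + β • ((E i).1 + ((E i).2 - (E i).1)) := by
      rw [hb i, ← heq]
      have hα' : α = 1 - β := by linarith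
      rw [hα']
    obtain ⟨h1, h2⟩ := cross_uniq v _ _ p (hD i) _ _ heq'
    refine ⟨h1, ?_⟩
    rw [← h2]
    exact ⟨hβ, by linarith⟩
  set S : Set (ℝ × ℝ) := {q |
      (∀ i : Fin n, crossU v (E i).1 ((E i).2 - (E i).1) q ∈ Set.Ioo (0:ℝ) 1) ∧
      ∀ i j : Fin n, i < j →
        crossT v (E i).1 ((E i).2 - (E i).1) q
          < crossT v (E j).1 ((E j).2 - (E j).1) q} with hS
  have hSopen : IsOpen S := by
    rw [hS, Set.setOf_and]
    apply IsOpen.inter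
    · rw [Set.setOf_forall]
      exact isOpen_iInter_of_finite fun i => isOpen_Ioo.preimage (cross_cont_U v _ _)
    · rw [Set.setOf_forall]
      refine isOpen_iInter_of_finite fun i => ?_
      rw [Set.setOf_forall]
      refine isOpen_iInter_of_finite fun j => ?_
      by_cases hij : i < j
      · simp only [hij, true_implies]
        exact isOpen_lt (cross_cont_T v _ _) (cross_cont_T v _ _)
      · simp only [hij, false_implies, Set.setOf_true]
        exact isOpen_univ
  have hpS : p ∈ S := by
    refine ⟨fun i => (hbase i).2, fun i j hij => ?_⟩
    rw [← (hbase i).1, ← (hbase j).1]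
    exact ht hij
  have hSreal : ∀ q ∈ S, RealizesWord n E q v := by
    intro q hq
    refine ⟨hv, hE, fun i => crossT v (E i).1 ((E i).2 - (E i).1) q,
      fun i j hij => hq.2 i j hij, fun i => ?_⟩
    refine ⟨1 - crossU v (E i).1 ((E i).2 - (E i).1) q,
      crossU v (E i).1 ((E i).2 - (E i).1) q,
      by linarith [(hq.1 i).2], (hq.1 i).1, by ring, ?_⟩
    have hk := cross_key v (E i).1 ((E i).2 - (E i).1) q (hD i)
    rw [hb i] at hk
    exact hk.symm
  have hSshift : ∀ q ∈ S, ∀ s : ℝ, q + s • v ∈ S := by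
    intro q hq s
    constructor
    · intro i
      rw [(cross_shift v _ _ q (hD i) s).2]
      exact hq.1 i
    · intro i j hij
      rw [(cross_shift v _ _ q (hD i) s).1, (cross_shift v _ _ q (hD j) s).1]
      have := hq.2 i j hij
      linarith
  obtain ⟨ε, hε, hball⟩ := Metric.isOpen_iff.mp hSopen p hpS
  have hmain : ∀ p' : ℝ × ℝ, (∃ s : ℝ, dist p' (p + s • v) < ε) →
      RealizesWord n E p' v := by
    rintro p' ⟨s, hs⟩
    have h1 : p' - s • v ∈ Metric.ball p ε := by
      rw [Metric.mem_ball, dist_eq_norm]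
      rw [dist_eq_norm] at hs
      have hab : p' - s • v - p = p' - (p + s • v) := by abel
      rw [hab]
      exact hs
    have h3 : p' ∈ S := by
      have := hSshift _ (hball h1) s
      rwa [sub_add_cancel] at this
    exact hSreal p' h3
  refine ⟨fun _ => ⟨ε, hε, hmain⟩, ?_⟩
  -- Part 2: find a nonsingular trajectory in the tube.
  have hv' : v.1 ≠ 0 ∨ v.2 ≠ 0 := by
    by_contra h; push_neg at h
    exact hv (Prod.ext_iff.mpr ⟨h.1, h.2⟩)
  have hc : (0:ℝ) < v.1 * v.1 + v.2 * v.2 := by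
    rcases hv' with h | h
    · nlinarith [mul_self_nonneg v.2, mul_self_pos.mpr h]
    · nlinarith [mul_self_nonneg v.1, mul_self_pos.mpr h]
  set c : ℝ := v.1 * v.1 + v.2 * v.2 with hcdef
  set F : (ℝ × ℝ) → ℝ := fun q => v.2 * q.1 - v.1 * q.2 with hF
  set B : Finset ℝ := V.image (fun z => (F p - F z) / c) with hB
  set u : ℝ × ℝ := (-v.2, v.1) with hu
  have hun : (0:ℝ) ≤ ‖u‖ := norm_nonneg _
  set m : ℝ := ε / (‖u‖ + 1) with hm
  have hm0 : 0 < m := div_pos hε (by linarith)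
  have hinf : (Set.Ioo (0:ℝ) m \ ↑B).Nonempty :=
    ((Set.Ioo_infinite hm0).diff B.finite_toSet).nonempty
  obtain ⟨δ, hδm, hδB⟩ := hinf
  set p' : ℝ × ℝ := p + δ • u with hp'
  have hdist : dist p' p < ε := by
    rw [hp', dist_eq_norm, add_sub_cancel_left, norm_smul, Real.norm_eq_abs,
      abs_of_pos hδm.1]
    have h1 : δ * (‖u‖ + 1) < m * (‖u‖ + 1) :=
      mul_lt_mul_of_pos_right hδm.2 (by linarith)
    have h2 : m * (‖u‖ + 1) = ε := by
      rw [hm]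
      field_simp
    nlinarith [hδm.1]
  refine ⟨p', hmain p' ⟨0, by simpa using hdist⟩, ?_⟩
  rintro ⟨τ, hτV⟩
  apply hδB
  have hFs : F (p' + τ • v) = F p' := by
    simp only [hF, Prod.fst_add, Prod.snd_add, Prod.smul_fst, Prod.smul_snd, smul_eq_mul]
    ring
  have hFp' : F p' = F p - δ * c := by
    simp only [hF, hp', hu, hcdef, Prod.fst_add, Prod.snd_add, Prod.smul_fst, Prod.smul_snd,
      smul_eq_mul]
    ring
  refine Finset.mem_coe.mpr (Finset.mem_image.mpr ⟨p' + τ • v, hτV, ?_⟩)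
  rw [hFs, hFp']
  rw [div_eq_iff (ne_of_gt hc)]
  ring
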